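/- arXiv:1611.02994 — 4 statements merged into one kernel-verified Lean document; each statement's English description precedes it below -/
import Mathlib

section
/- Let (G_i)_{i∈I} be a nonempty family of Hausdorff topological abelian groups (written additively), and let G = ⊕_{i∈I} G_i be their direct sum, i.e., the subgroup of the product ∏_{i∈I} G_i consisting of elements with only finitely many nonzero coordinates. Let τ be a topological group topology on G that is finer than or equal to the subspace topology induced on G by the box topology on the product. If A ⊆ G is functionally bounded in (G,τ), then the support supp(A) = {i ∈ I : there exists v ∈ A with v_i ≠ 0} is finite. -/
open Set Topology DirectSum

section Auxiliary

open Filter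


lemma sep_aux_cont {X : Type*} [PseudoMetricSpace X] (x z : X) :
    Continuous (fun y : X => min 1 (dist y z / dist x z)) :=
  continuous_const.min ((continuous_id.dist continuous_const).div_const _)

lemma exists_sep_fun {X : Type*} [AddCommGroup X] [TopologicalSpace X]
    [IsTopologicalAddGroup X] [T2Space X] (x : X) (hx : x ≠ 0) :
    ∃ f : X → ℝ, Continuous f ∧ f 0 = 0 ∧ (∀ y, 0 ≤ f y) ∧ f x = 1 := by
  classical
  have step : ∀ W : Set X, W ∈ 𝓝 (0:X) → ∃ V : Set X, V ∈ 𝓝 (0:X) ∧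
      (∀ a ∈ V, -a ∈ V) ∧ (∀ a ∈ V, ∀ b ∈ V, a + b ∈ W) ∧ V ⊆ W := by
    intro W hW
    obtain ⟨V, hV, hsplit⟩ := exists_nhds_half_neg hW
    refine ⟨V ∩ (fun a => -a) ⁻¹' V, ?_, ?_, ?_, ?_⟩
    · exact Filter.inter_mem hV (((continuous_neg).tendsto' (0:X) 0 (by simp)).eventually_mem hV)
    · rintro a ⟨h1, h2⟩; exact ⟨h2, by simpa using h1⟩
    · rintro a ⟨ha, -⟩ b ⟨-, hb⟩
      have := hsplit a ha (-b) hb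
      simpa [sub_neg_eq_add] using this
    · rintro a ⟨ha, -⟩
      have := hsplit a ha 0 (mem_of_mem_nhds hV)
      simpa using this
  choose! V hVnhds hVsym hVadd hVsub using step
  have hxc : ({x}ᶜ : Set X) ∈ 𝓝 (0:X) :=
    (isOpen_compl_singleton).mem_nhds (by simpa using hx.symm)
  set U : ℕ → Set X := fun n => Nat.rec (V {x}ᶜ) (fun _ S => V S) n with hU
  have hUnhds : ∀ n, U n ∈ 𝓝 (0:X) := by
    intro n; induction n with
    | zero => exact hVnhds _ hxc
    | succ n ih => exact hVnhds _ ih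
  have hUsym : ∀ n, ∀ a ∈ U n, -a ∈ U n := by
    intro n; cases n with
    | zero => exact hVsym _ hxc
    | succ n => exact hVsym _ (hUnhds n)
  have hUadd : ∀ n, ∀ a ∈ U (n+1), ∀ b ∈ U (n+1), a + b ∈ U n := by
    intro n; exact hVadd _ (hUnhds n)
  have hUanti : ∀ n, U (n+1) ⊆ U n := fun n => hVsub _ (hUnhds n)
  have hUanti' : Antitone U := antitone_nat_of_succ_le hUanti
  have hxU0 : x ∉ U 0 := fun h => (hVsub _ hxc h) rfl
  -- group filter basis
  let B : AddGroupFilterBasis X := addGroupFilterBasisOfComm (Set.range U)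
    ⟨U 0, 0, rfl⟩
    (by
      rintro _ _ ⟨m, rfl⟩ ⟨n, rfl⟩
      exact ⟨U (max m n), ⟨max m n, rfl⟩,
        Set.subset_inter (hUanti' (le_max_left m n)) (hUanti' (le_max_right m n))⟩)
    (by rintro _ ⟨n, rfl⟩; exact mem_of_mem_nhds (hUnhds n))
    (by
      rintro _ ⟨n, rfl⟩
      refine ⟨U (n+1), ⟨n+1, rfl⟩, ?_⟩
      rw [Set.add_subset_iff]
      exact hUadd n)
    (by
      rintro _ ⟨n, rfl⟩
      exact ⟨U n, ⟨n, rfl⟩, fun a ha => hUsym n a ha⟩)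
  have hfil : 𝓝 (0:X) ≤ B.toFilterBasis.filter := by
    intro s hs
    rcases B.toFilterBasis.mem_filter_iff.mp hs with ⟨t, ⟨n, rfl⟩, hts⟩
    exact mem_of_superset (hUnhds n) hts
  -- the original topology is finer than B.topology
  have hle : ‹TopologicalSpace X› ≤ B.topology := by
    refine le_of_nhds_le_nhds fun a => ?_
    rw [B.nhds_eq]
    calc 𝓝 a = Filter.map (fun y => a + y) (𝓝 (0:X)) := by
          rw [map_add_left_nhds_zero]
      _ ≤ Filter.map (fun y => a + y) B.toFilterBasis.filter := Filter.map_mono hfil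
  letI τ' : TopologicalSpace X := B.topology
  haveI hτ'grp : @IsTopologicalAddGroup X τ' _ := B.isTopologicalAddGroup
  letI US : UniformSpace X := @IsTopologicalAddGroup.rightUniformSpace X _ τ' _
  haveI hUAG : @IsUniformAddGroup X US _ := @isUniformAddGroup_of_addCommGroup X _ τ' _
  have hUStop : US.toTopologicalSpace = τ' := rfl
  haveI : Filter.IsCountablyGenerated (@uniformity X US) := by
    have hBbasis : B.toFilterBasis.filter.HasBasis (fun _ : ℕ => True) U := by
      constructor
      intro s
      rw [B.toFilterBasis.mem_filter_iff]
      constructor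
      · rintro ⟨t, ⟨n, rfl⟩, h⟩; exact ⟨n, trivial, h⟩
      · rintro ⟨n, -, h⟩; exact ⟨U n, ⟨n, rfl⟩, h⟩
    have h0 : @nhds X τ' 0 = B.toFilterBasis.filter := B.nhds_zero_eq
    have huni : @uniformity X US = Filter.comap (fun p : X × X => p.2 - p.1) (@nhds X τ' 0) :=
      @uniformity_eq_comap_nhds_zero X US _ inferInstance
    rw [huni, h0]
    haveI : B.toFilterBasis.filter.IsCountablyGenerated := hBbasis.isCountablyGenerated
    infer_instance
  obtain ⟨m, hm⟩ := UniformSpace.metrizable_uniformity X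
  -- continuity of the candidate function for τ'
  have hc0 := @sep_aux_cont X m x 0
  rw [hm, hUStop] at hc0
  -- U 0 contains a metric ball around 0
  have hU0nhds : U 0 ∈ @nhds X τ' 0 := by
    rw [B.nhds_zero_eq]
    exact B.toFilterBasis.mem_filter_of_mem ⟨0, rfl⟩
  rw [← hUStop, ← hm] at hU0nhds
  obtain ⟨ε, hε, h⟩ := (@Metric.mem_nhds_iff X m (0:X) (U 0)).mp hU0nhds
  have hball : ∀ y, @dist X m.toDist y 0 < ε → y ∈ U 0 := fun y hy => h hy
  have hdx : ε ≤ @dist X m.toDist x 0 := by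
    by_contra hcon
    exact hxU0 (hball x (lt_of_not_ge hcon))
  have hdxpos : 0 < @dist X m.toDist x 0 := lt_of_lt_of_le hε hdx
  refine ⟨fun y => min 1 (@dist X m.toDist y 0 / @dist X m.toDist x 0), ?_, ?_, ?_, ?_⟩
  · exact continuous_le_dom hle hc0
  · have h0 : @dist X m.toDist (0:X) 0 = 0 := @dist_self X m 0
    simp [h0]
  · intro y
    exact le_min zero_le_one (div_nonneg (@dist_nonneg X m y 0) hdxpos.le)
  · simp [div_self hdxpos.ne']

end Auxiliary

/-- The box topology on a product of topological spaces. -/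
def boxTopology {I : Type*} (G : I → Type*) [∀ i, TopologicalSpace (G i)] :
    TopologicalSpace (∀ i, G i) :=
  TopologicalSpace.generateFrom
    {S | ∃ U : ∀ i, Set (G i), (∀ i, IsOpen (U i)) ∧ S = Set.pi Set.univ U}

/-- If `τ` is a group topology on the direct sum `⨁ i, G i` finer than (or equal to) the
subspace topology induced by the box topology on the product, then every subset of the direct
sum that is functionally bounded with respect to `τ` has finite support. -/
theorem statement14 {I : Type*} [Nonempty I] (G : I → Type*) [∀ i, AddCommGroup (G i)]
    [∀ i, TopologicalSpace (G i)] [∀ i, IsTopologicalAddGroup (G i)] [∀ i, T2Space (G i)]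
    (τ : TopologicalSpace (⨁ i, G i))
    (hgrp : @IsTopologicalAddGroup (⨁ i, G i) τ _)
    (hfine : τ ≤ TopologicalSpace.induced
      (fun v : ⨁ i, G i => (fun i => v i : ∀ i, G i)) (boxTopology G))
    (A : Set (⨁ i, G i))
    (hA : ∀ f : (⨁ i, G i) → ℝ, @Continuous _ _ τ _ f → Bornology.IsBounded (f '' A)) :
    Set.Finite {i : I | ∃ v ∈ A, v i ≠ 0} := by
  classical
  by_contra hfin
  have hinf : Set.Infinite {i : I | ∃ v ∈ A, v i ≠ 0} := hfin
  let idx : ℕ → I := fun n => (hinf.natEmbedding _ n : I)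
  have hidx_inj : Function.Injective idx := fun a b h =>
    (hinf.natEmbedding _).injective (Subtype.ext h)
  have hidx_mem : ∀ n, ∃ v ∈ A, v (idx n) ≠ 0 := fun n => (hinf.natEmbedding _ n).2
  choose v hvA hvne using hidx_mem
  -- per-coordinate functions
  have key : ∀ j : I, ∃ f : G j → ℝ, Continuous f ∧ f 0 = 0 ∧ (∀ y, 0 ≤ f y) ∧
      (∀ n : ℕ, idx n = j → (n : ℝ) ≤ f (v n j)) := by
    intro j
    by_cases hex : ∃ n, idx n = j
    · obtain ⟨n, rfl⟩ := hex
      obtain ⟨f0, hc, h0, hnn, h1⟩ := exists_sep_fun (v n (idx n)) (hvne n)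
      refine ⟨fun y => (n : ℝ) * f0 y, continuous_const.mul hc, by simp [h0],
        fun y => mul_nonneg (Nat.cast_nonneg n) (hnn y), ?_⟩
      intro m hm
      have hmn : m = n := hidx_inj hm
      subst hmn
      simp [h1]
    · exact ⟨fun _ => 0, continuous_const, rfl, fun _ => le_rfl,
        fun n hn => absurd ⟨n, hn⟩ hex⟩
  choose f hfc hf0 hfnn hfbd using key
  -- the sup function
  let F : (⨁ i, G i) → ℝ := fun w =>
    ((DFinsupp.support w).sup (fun j => Real.toNNReal (f j (w j))) : NNReal)
  have lb : ∀ (w : ⨁ i, G i) (j : I), f j (w j) ≤ F w := by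
    intro w j
    have h1 : Real.toNNReal (f j (w j)) ≤
        (DFinsupp.support w).sup (fun j => Real.toNNReal (f j (w j))) := by
      by_cases h : w j = 0
      · rw [h, hf0]
        simp
      · exact Finset.le_sup (f := fun j => Real.toNNReal (f j (w j)))
          (DFinsupp.mem_support_iff.mpr h)
    calc f j (w j) ≤ (Real.toNNReal (f j (w j)) : ℝ) := Real.le_coe_toNNReal _
      _ ≤ F w := NNReal.coe_le_coe.mpr h1
  have ub : ∀ (w : ⨁ i, G i) (c : ℝ), 0 ≤ c → (∀ j, f j (w j) ≤ c) → F w ≤ c := by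
    intro w c hc h
    have h1 : (DFinsupp.support w).sup (fun j => Real.toNNReal (f j (w j))) ≤
        Real.toNNReal c :=
      Finset.sup_le fun j _ => Real.toNNReal_mono (h j)
    calc F w ≤ (Real.toNNReal c : ℝ) := NNReal.coe_le_coe.mpr h1
      _ = c := Real.coe_toNNReal _ hc
  have Fnn : ∀ w, 0 ≤ F w := fun w => NNReal.coe_nonneg _
  -- continuity of F w.r.t. the induced box topology
  letI τb : TopologicalSpace (⨁ i, G i) := TopologicalSpace.induced
      (fun v : ⨁ i, G i => (fun i => v i : ∀ i, G i)) (boxTopology G)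
  have hFb : Continuous[τb, _] F := by
    letI : TopologicalSpace (∀ i, G i) := boxTopology G
    refine (@continuous_iff_continuousAt _ _ τb _ F).mpr fun w => ?_
    have hnh : @nhds _ τb w = Filter.comap (fun v : ⨁ i, G i => (fun i => v i : ∀ i, G i))
        (@nhds (∀ i, G i) (boxTopology G) (fun i => w i)) :=
      nhds_induced (fun v : ⨁ i, G i => (fun i => v i : ∀ i, G i)) w
    show Filter.Tendsto F (@nhds _ τb w) (nhds (F w))
    rw [Metric.tendsto_nhds]
    intro ε hε
    rw [hnh]
    set Uset : ∀ j, Set (G j) := fun j => f j ⁻¹' Metric.ball (f j (w j)) (ε/2) with hUset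
    have hopen : @IsOpen (∀ i, G i) (boxTopology G) (Set.pi Set.univ Uset) :=
      TopologicalSpace.isOpen_generateFrom_of_mem
        ⟨Uset, fun j => (Metric.isOpen_ball).preimage (hfc j), rfl⟩
    have hmemw : (fun i => w i) ∈ Set.pi Set.univ Uset := by
      intro j _
      simp [hUset, Metric.mem_ball, dist_self, half_pos hε]
    have hT : Set.pi Set.univ Uset ∈ @nhds (∀ i, G i) (boxTopology G) (fun i => w i) :=
      hopen.mem_nhds hmemw
    refine Filter.eventually_of_mem (Filter.preimage_mem_comap hT) ?_
    intro x hx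
    have hx' : ∀ j, dist (f j (x j)) (f j (w j)) < ε/2 := by
      intro j
      have := hx j (Set.mem_univ j)
      simpa [hUset, Metric.mem_ball] using this
    have h1 : F x ≤ F w + ε/2 := by
      refine ub x _ (add_nonneg (Fnn w) (half_pos hε).le) fun j => ?_
      have habs := abs_lt.mp (by simpa [Real.dist_eq] using hx' j)
      have hlb := lb w j
      linarith [habs.1, habs.2]
    have h2 : F w ≤ F x + ε/2 := by
      refine ub w _ (add_nonneg (Fnn x) (half_pos hε).le) fun j => ?_
      have habs := abs_lt.mp (by simpa [Real.dist_eq] using hx' j)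
      have hlb := lb x j
      linarith [habs.1, habs.2]
    rw [Real.dist_eq, abs_lt]
    constructor <;> linarith
  have hFcont : @Continuous _ _ τ _ F := continuous_le_dom hfine hFb
  obtain ⟨C, hC⟩ := isBounded_iff_forall_norm_le.mp (hA F hFcont)
  obtain ⟨n, hn⟩ := exists_nat_gt C
  have h1 : (n : ℝ) ≤ F (v n) := le_trans (hfbd (idx n) n rfl) (lb (v n) (idx n))
  have h2 : ‖F (v n)‖ ≤ C := hC _ ⟨v n, hvA n, rfl⟩
  have h3 : F (v n) ≤ C := le_trans (le_abs_self _) h2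
  linarith
end

section
/- Let (E_i)_{i∈I} be a family of nontrivial (i.e., E_i ≠ {0}) Hausdorff real locally convex spaces indexed by an uncountable set I, and let E = ⊕_{i∈I} E_i be their direct sum (elements of the product with only finitely many nonzero coordinates), equipped with the subspace topology induced by the box topology on the product ∏_{i∈I} E_i. Then E is not an Ascoli space. -/
open Set Topology DirectSum

/-- A topological space `Y` is Ascoli if every compact subset of `C(Y,ℝ)` (with the
compact-open topology) is equicontinuous. -/
def IsAscoli (Y : Type*) [TopologicalSpace Y] : Prop :=
  ∀ K : Set C(Y, ℝ), IsCompact K → Equicontinuous fun f : K => ((f : C(Y, ℝ)) : Y → ℝ)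

section BoxAux

variable {I : Type*} {G : I → Type*} [∀ i, TopologicalSpace (G i)]

lemma box_isOpen_pi (U : ∀ i, Set (G i)) (hU : ∀ i, IsOpen (U i)) :
    IsOpen[boxTopology G] (Set.pi Set.univ U) :=
  TopologicalSpace.GenerateOpen.basic _ ⟨U, hU, rfl⟩

lemma box_exists_pi {s : Set (∀ i, G i)} (hs : IsOpen[boxTopology G] s) :
    ∀ x ∈ s, ∃ U : ∀ i, Set (G i),
      (∀ i, IsOpen (U i)) ∧ (∀ i, x i ∈ U i) ∧ Set.pi Set.univ U ⊆ s := by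
  induction hs with
  | basic t ht =>
      obtain ⟨U, hU, rfl⟩ := ht
      exact fun x hx => ⟨U, hU, fun i => hx i (mem_univ i), subset_rfl⟩
  | univ => exact fun x _ => ⟨fun _ => Set.univ, fun _ => isOpen_univ,
      fun _ => mem_univ _, subset_univ _⟩
  | inter s t _ _ ihs iht =>
      rintro x ⟨hxs, hxt⟩
      obtain ⟨U, hU, hxU, hUs⟩ := ihs x hxs
      obtain ⟨V, hV, hxV, hVt⟩ := iht x hxt
      refine ⟨fun i => U i ∩ V i, fun i => (hU i).inter (hV i),
        fun i => ⟨hxU i, hxV i⟩, fun y hy => ⟨hUs fun i _ => (hy i (mem_univ i)).1,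
          hVt fun i _ => (hy i (mem_univ i)).2⟩⟩
  | sUnion S _ ih =>
      rintro x ⟨t, htS, hxt⟩
      obtain ⟨U, hU, hxU, hUt⟩ := ih t htS x hxt
      exact ⟨U, hU, hxU, hUt.trans (subset_sUnion_of_mem htS)⟩

lemma box_continuous_apply (i : I) :
    Continuous[boxTopology G, _] (fun v : ∀ i, G i => v i) := by
  rw [continuous_def]
  intro V hV
  classical
  have : (fun v : ∀ i, G i => v i) ⁻¹' V =
      Set.pi Set.univ (Function.update (fun j => (Set.univ : Set (G j))) i V) := by
    ext v
    simp only [mem_preimage, mem_pi, mem_univ, forall_true_left]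
    constructor
    · intro h j
      rcases eq_or_ne j i with rfl | hj
      · simpa using h
      · simp [Function.update_of_ne hj]
    · intro h
      simpa using h i
  rw [this]
  exact box_isOpen_pi _ fun j => by
    rcases eq_or_ne j i with rfl | hj
    · simpa using hV
    · simp [Function.update_of_ne hj]

end BoxAux

/-- For the direct sum with the topology induced from the box topology, every compact set
has its supports contained in a common finite set. -/
lemma compact_support_finite {I : Type*} (E : I → Type*) [∀ i, AddCommGroup (E i)]
    [∀ i, TopologicalSpace (E i)] [∀ i, T1Space (E i)] {C : Set (⨁ i, E i)}
    (hC : @IsCompact _ (TopologicalSpace.induced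
      (fun v : ⨁ i, E i => (fun i => v i : ∀ i, E i)) (boxTopology E)) C) :
    ∃ T : Finset I, ∀ x ∈ C, ∀ j, x j ≠ 0 → j ∈ T := by
  classical
  letI τ : TopologicalSpace (⨁ i, E i) :=
    TopologicalSpace.induced (fun v : ⨁ i, E i => (fun i => v i : ∀ i, E i)) (boxTopology E)
  set D : Set I := {i | ∃ x ∈ C, (x : ⨁ i, E i) i ≠ 0} with hD
  by_cases hDfin : D.Finite
  · refine ⟨hDfin.toFinset, fun x hx j hj => ?_⟩
    simp only [Set.Finite.mem_toFinset]
    exact ⟨x, hx, hj⟩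
  · exfalso
    have hDinf : D.Infinite := hDfin
    let u : ℕ ↪ D := hDinf.natEmbedding
    have hu : ∀ {n m : ℕ}, ((u n : I) = (u m : I)) → n = m := by
      intro n m h
      exact u.injective (Subtype.coe_injective h)
    have hmem : ∀ n : ℕ, ∃ x, x ∈ C ∧ (x : ⨁ i, E i) ((u n : I)) ≠ 0 := by
      intro n
      obtain ⟨x, hx, hne⟩ := (u n).2
      exact ⟨x, hx, hne⟩
    choose ξ hξC hξ using hmem
    -- the open sets
    set Um : ℕ → ∀ i, Set (E i) :=
      fun m i => {y : E i | ∀ n, m ≤ n → (u n : I) = i → y ≠ ξ n i} with hUm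
    have hUmOpen : ∀ m i, IsOpen (Um m i) := by
      intro m i
      by_cases h : ∃ n, m ≤ n ∧ (u n : I) = i
      · obtain ⟨n₀, hn₀m, hn₀i⟩ := h
        have : Um m i = {ξ n₀ i}ᶜ := by
          ext y
          constructor
          · intro hy
            exact hy n₀ hn₀m hn₀i
          · intro hy n hn hni
            have : n = n₀ := hu (hni.trans hn₀i.symm)
            subst this
            exact hy
        rw [this]
        exact isOpen_compl_singleton
      · have : Um m i = Set.univ := by
          ext y
          simp only [Set.mem_setOf_eq, Set.mem_univ, iff_true]
          intro n hn hni
          exact absurd ⟨n, hn, hni⟩ h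
        rw [this]
        exact isOpen_univ
    set W : ℕ → Set (⨁ i, E i) :=
      fun m => (fun v : ⨁ i, E i => (fun i => v i : ∀ i, E i)) ⁻¹' (Set.pi Set.univ (Um m))
        with hW
    have hWopen : ∀ m, IsOpen (W m) := fun m =>
      @isOpen_induced _ _ (boxTopology E) _ _ (box_isOpen_pi _ (hUmOpen m))
    have hWmono : ∀ {m m' : ℕ}, m ≤ m' → W m ⊆ W m' := by
      intro m m' hmm' x hx i _
      intro n hn hni
      exact hx i (Set.mem_univ i) n (hmm'.trans hn) hni
    have hcover : C ⊆ ⋃ m, W m := by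
      intro x hx
      have hfin : {n : ℕ | (u n : I) ∈ x.support}.Finite := by
        apply Set.Finite.preimage (f := fun n : ℕ => (u n : I))
        · intro a _ b _ h
          exact hu h
        · exact x.support.finite_toSet
      obtain ⟨b, hb⟩ := hfin.bddAbove
      refine Set.mem_iUnion.2 ⟨b + 1, ?_⟩
      intro i _
      intro n hn hni
      have hnot : (u n : I) ∉ x.support := by
        intro hmem'
        have : n ≤ b := hb hmem'
        omega
      have hx0 : (x : ⨁ i, E i) ((u n : I)) = 0 := by
        by_contra h
        exact hnot (DFinsupp.mem_support_iff.2 h)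
      show x i ≠ ξ n i
      subst hni
      rw [hx0]
      exact fun h => hξ n h.symm
    obtain ⟨s, hs⟩ := hC.elim_finite_subcover W hWopen hcover
    set M := s.sup id with hM
    have hsub : C ⊆ W M := by
      intro x hx
      obtain ⟨m, hm, hxm⟩ := Set.mem_iUnion₂.1 (hs hx)
      exact hWmono (Finset.le_sup (f := id) hm) hxm
    have := hsub (hξC M) ((u M : I)) (Set.mem_univ _) M le_rfl rfl
    exact this rfl

/-- The direct sum of an uncountable family of nontrivial Hausdorff real locally convex
spaces, equipped with the subspace topology induced by the box topology on the product,
is not an Ascoli space. -/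
theorem statement15 {I : Type*} [Uncountable I] (E : I → Type*) [∀ i, AddCommGroup (E i)]
    [∀ i, Module ℝ (E i)] [∀ i, TopologicalSpace (E i)] [∀ i, IsTopologicalAddGroup (E i)]
    [∀ i, ContinuousSMul ℝ (E i)] [∀ i, LocallyConvexSpace ℝ (E i)] [∀ i, T2Space (E i)]
    [∀ i, Nontrivial (E i)] :
    ¬ @IsAscoli (⨁ i, E i)
      (TopologicalSpace.induced (fun v : ⨁ i, E i => (fun i => v i : ∀ i, E i))
        (boxTopology E)) := by
  classical
  letI τ : TopologicalSpace (⨁ i, E i) :=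
    TopologicalSpace.induced (fun v : ⨁ i, E i => (fun i => v i : ∀ i, E i)) (boxTopology E)
  intro hA
  -- continuous linear functionals normalized on a chosen nonzero vector
  have hsep : ∀ i, ∃ (φ : E i →L[ℝ] ℝ) (v : E i), φ v = 1 := by
    intro i
    obtain ⟨v, hv⟩ := exists_ne (0 : E i)
    obtain ⟨ψ, hψ⟩ := SeparatingDual.exists_ne_zero (R := ℝ) hv
    refine ⟨(ψ v)⁻¹ • ψ, v, ?_⟩
    simp [inv_mul_cancel₀ hψ]
  choose φ v hφv using hsep
  -- the bump functions on ℝ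
  set h : ℕ → ℝ → ℝ := fun n s => min 1 (max 0 (((n : ℝ) + 1) * |s| - 1)) with hh
  have hcont : ∀ n, Continuous (h n) := by
    intro n
    exact continuous_const.min (continuous_const.max
      (((continuous_const.mul continuous_abs)).sub continuous_const))
  have hzero : ∀ n, h n 0 = 0 := by intro n; simp [hh]
  have hnonneg : ∀ n s, 0 ≤ h n s := fun n s => le_min zero_le_one (le_max_left _ _)
  have hle1 : ∀ n s, h n s ≤ 1 := fun n s => min_le_left _ _
  have hsmall : ∀ (n : ℕ) (s : ℝ), |s| < ((n : ℝ) + 1)⁻¹ → h n s = 0 := by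
    intro n s hs
    have hn : (0 : ℝ) < (n : ℝ) + 1 := by positivity
    have : ((n : ℝ) + 1) * |s| < 1 := by
      have := (mul_lt_mul_iff_right₀ hn).2 hs
      rwa [mul_inv_cancel₀ hn.ne'] at this
    have h1 : max 0 (((n : ℝ) + 1) * |s| - 1) = 0 := max_eq_left (by linarith)
    rw [hh]
    simp only []
    rw [h1]
    exact min_eq_right zero_le_one
  have hbig : ∀ (n : ℕ) (s : ℝ), 2 / ((n : ℝ) + 1) ≤ s → h n s = 1 := by
    intro n s hs
    have hn : (0 : ℝ) < (n : ℝ) + 1 := by positivity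
    have h2 : (2 : ℝ) / ((n : ℝ) + 1) ≤ |s| := hs.trans (le_abs_self s)
    have h3 : (2 : ℝ) ≤ ((n : ℝ) + 1) * |s| := by
      rw [div_le_iff₀ hn] at h2
      linarith [h2]
    have h1 : (1 : ℝ) ≤ max 0 (((n : ℝ) + 1) * |s| - 1) := le_max_of_le_right (by linarith)
    rw [hh]
    simp only []
    exact min_eq_left h1
  -- the sequence of test functions on the direct sum
  set g : ℕ → (⨁ i, E i) → ℝ := fun n x =>
    min 1 (((n : ℝ) + 1)⁻¹ * ∑ i ∈ x.support, h n (φ i (x i))) with hg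
  have hg0 : ∀ n, g n 0 = 0 := by
    intro n
    rw [hg]
    simp only [DFinsupp.support_zero, Finset.sum_empty, mul_zero]
    exact min_eq_right zero_le_one
  have hgnonneg : ∀ n x, 0 ≤ g n x := by
    intro n x
    refine le_min zero_le_one (mul_nonneg (by positivity) ?_)
    exact Finset.sum_nonneg fun i _ => hnonneg n _
  -- continuity
  have hcoe : Continuous[τ, boxTopology E]
      (fun v : ⨁ i, E i => (fun i => v i : ∀ i, E i)) := continuous_induced_dom
  have hcoord : ∀ i : I, Continuous fun x : ⨁ i, E i => φ i (x i) := by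
    intro i
    exact (φ i).continuous.comp (@Continuous.comp _ _ _ τ (boxTopology E) _ _ _ (box_continuous_apply i) hcoe)
  have hgcont : ∀ n, Continuous (g n) := by
    intro n
    rw [continuous_iff_continuousAt]
    intro x₀
    set S := x₀.support with hS
    set G : (⨁ i, E i) → ℝ := fun x =>
      min 1 (((n : ℝ) + 1)⁻¹ * ∑ i ∈ S, h n (φ i (x i))) with hG
    have hGcont : Continuous G := by
      refine continuous_const.min (continuous_const.mul ?_)
      exact continuous_finset_sum _ fun i _ => (hcont n).comp (hcoord i)
    -- the neighborhood where g n and G agree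
    set Us : ∀ i, Set (E i) := fun i =>
      if i ∈ S then Set.univ else (φ i) ⁻¹' {s : ℝ | |s| < ((n : ℝ) + 1)⁻¹} with hUs
    have hUsOpen : ∀ i, IsOpen (Us i) := by
      intro i
      rw [hUs]
      by_cases hi : i ∈ S
      · simp [hi]
      · simp only [hi, if_false]
        exact (isOpen_lt continuous_abs continuous_const).preimage (φ i).continuous
    set Wn : Set (⨁ i, E i) :=
      (fun v : ⨁ i, E i => (fun i => v i : ∀ i, E i)) ⁻¹' (Set.pi Set.univ Us) with hWn
    have hWnOpen : IsOpen Wn :=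
      @isOpen_induced _ _ (boxTopology E) _ _ (box_isOpen_pi _ hUsOpen)
    have hx₀Wn : x₀ ∈ Wn := by
      intro i _
      rw [hUs]
      by_cases hi : i ∈ S
      · simp [hi]
      · simp only [hi, if_false, Set.mem_preimage, Set.mem_setOf_eq]
        have : x₀ i = 0 := by
          by_contra hne
          exact hi (DFinsupp.mem_support_iff.2 hne)
        show |φ i (x₀ i)| < ((n : ℝ) + 1)⁻¹
        rw [this, map_zero, abs_zero]
        positivity
    have hagree : ∀ x ∈ Wn, g n x = G x := by
      intro x hx
      rw [hg, hG]
      simp only []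
      congr 2
      have step1 : ∑ i ∈ x.support, h n (φ i (x i))
          = ∑ i ∈ x.support ∪ S, h n (φ i (x i)) := by
        refine Finset.sum_subset Finset.subset_union_left ?_
        intro i _ hi
        have : x i = 0 := by
          by_contra hne
          exact hi (DFinsupp.mem_support_iff.2 hne)
        rw [this, map_zero, hzero]
      have step2 : ∑ i ∈ S, h n (φ i (x i))
          = ∑ i ∈ x.support ∪ S, h n (φ i (x i)) := by
        refine Finset.sum_subset Finset.subset_union_right ?_
        intro i _ hiS
        have hxi := hx i (Set.mem_univ i)
        rw [hUs] at hxi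
        simp only [hiS, if_false, Set.mem_preimage, Set.mem_setOf_eq] at hxi
        exact hsmall n _ hxi
      rw [step1, step2]
    exact (hGcont.continuousAt).congr
      (Filter.eventuallyEq_of_mem (hWnOpen.mem_nhds hx₀Wn) fun x hx => (hagree x hx).symm)
  -- bundle as continuous maps
  set fc : ℕ → C(⨁ i, E i, ℝ) := fun n => ⟨g n, hgcont n⟩ with hfc
  -- fc tends to 0 in the compact-open topology
  have htendsto : Filter.Tendsto fc Filter.atTop (𝓝 0) := by
    rw [ContinuousMap.tendsto_iff_forall_isCompact_tendstoUniformlyOn]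
    intro C hC
    obtain ⟨T, hT⟩ := compact_support_finite E hC
    rw [Metric.tendstoUniformlyOn_iff]
    intro ε hε
    obtain ⟨N, hN⟩ := exists_nat_gt ((T.card : ℝ) / ε)
    filter_upwards [Filter.eventually_ge_atTop N] with n hn
    intro x hx
    have hsupp : x.support ⊆ T := fun j hj => hT x hx j (DFinsupp.mem_support_iff.1 hj)
    have hbound : g n x ≤ ((n : ℝ) + 1)⁻¹ * T.card := by
      refine (min_le_right _ _).trans ?_
      refine mul_le_mul_of_nonneg_left ?_ (by positivity)
      calc ∑ i ∈ x.support, h n (φ i (x i)) ≤ ∑ _i ∈ x.support, (1 : ℝ) :=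
            Finset.sum_le_sum fun i _ => hle1 n _
        _ = x.support.card := by simp
        _ ≤ T.card := by exact_mod_cast Finset.card_le_card hsupp
    have hlt : ((n : ℝ) + 1)⁻¹ * T.card < ε := by
      have hn1 : (0 : ℝ) < (n : ℝ) + 1 := by positivity
      rw [inv_mul_lt_iff₀ hn1]
      have hNn : (N : ℝ) ≤ (n : ℝ) := by exact_mod_cast hn
      have : (T.card : ℝ) / ε < (n : ℝ) + 1 := by linarith
      rw [div_lt_iff₀ hε] at this
      linarith [this]
    have : dist ((0 : C(⨁ i, E i, ℝ)) x) (fc n x) < ε := by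
      have : fc n x = g n x := rfl
      rw [this]
      simp only [ContinuousMap.zero_apply]
      rw [dist_comm, Real.dist_eq, sub_zero, abs_of_nonneg (hgnonneg n x)]
      exact lt_of_le_of_lt hbound hlt
    exact this
  -- the compact set of continuous functions
  set K : Set C(⨁ i, E i, ℝ) := insert 0 (Set.range fc) with hK
  have hKcomp : IsCompact K := htendsto.isCompact_insert_range
  have hEqui := hA K hKcomp
  have hEq0 := hEqui 0
  rw [Metric.equicontinuousAt_iff_right] at hEq0
  obtain hev := hEq0 1 one_pos
  -- extract a box neighborhood of 0
  rw [@nhds_induced _ _ (boxTopology E)] at hev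
  obtain ⟨V, hV, hVsub⟩ := Filter.mem_comap.1 hev
  rw [@mem_nhds_iff _ (boxTopology E)] at hV
  obtain ⟨O, hOV, hOopen, hO0⟩ := hV
  obtain ⟨Us, hUsOpen, hUs0, hUsO⟩ := box_exists_pi hOopen _ hO0
  have hUs0' : ∀ i, (0 : E i) ∈ Us i := by
    intro i
    have := hUs0 i
    simpa using this
  -- find scales t i > 0 with t i • v i ∈ Us i
  have hscale : ∀ i : I, ∃ t : ℝ, 0 < t ∧ t • v i ∈ Us i := by
    intro i
    have hcont' : Filter.Tendsto (fun t : ℝ => t • v i) (𝓝 0) (𝓝 0) := by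
      have : Filter.Tendsto (fun t : ℝ => t • v i) (𝓝 0) (𝓝 ((0 : ℝ) • v i)) :=
        (continuous_id.smul (continuous_const (y := v i))).tendsto (0 : ℝ)
      rwa [zero_smul] at this
    have h1 : ∀ᶠ t : ℝ in 𝓝[>] 0, t • v i ∈ Us i :=
      ((hcont'.mono_left nhdsWithin_le_nhds).eventually
        ((hUsOpen i).eventually_mem (hUs0' i)))
    have h2 : ∀ᶠ t : ℝ in 𝓝[>] 0, 0 < t := self_mem_nhdsWithin
    obtain ⟨t, ht1, ht2⟩ := (h1.and h2).exists
    exact ⟨t, ht2, ht1⟩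
  choose t ht0 htmem using hscale
  -- pigeonhole: some scale class is infinite
  have hpigeon : ∃ n : ℕ, {i : I | 2 / ((n : ℝ) + 1) ≤ t i}.Infinite := by
    by_contra hcon
    push_neg at hcon
    have hfin : ∀ n : ℕ, {i : I | 2 / ((n : ℝ) + 1) ≤ t i}.Finite :=
      fun n => hcon n
    have hcover : (Set.univ : Set I) ⊆ ⋃ n : ℕ, {i : I | 2 / ((n : ℝ) + 1) ≤ t i} := by
      intro i _
      obtain ⟨n, hn⟩ := exists_nat_gt (2 / t i)
      refine Set.mem_iUnion.2 ⟨n, ?_⟩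
      have hti : 0 < t i := ht0 i
      have hn1 : (0 : ℝ) < (n : ℝ) + 1 := by positivity
      have : 2 / t i < (n : ℝ) + 1 := by linarith
      rw [div_lt_iff₀ hti] at this
      show 2 / ((n : ℝ) + 1) ≤ t i
      rw [div_le_iff₀ hn1]
      linarith [this]
    have : (Set.univ : Set I).Countable :=
      Set.Countable.mono hcover (Set.countable_iUnion fun n => (hfin n).countable)
    exact (not_countable_iff.2 inferInstance) (Set.countable_univ_iff.1 this)
  obtain ⟨n, hinf⟩ := hpigeon
  obtain ⟨T', hT'sub, hT'card⟩ := hinf.exists_subset_card_eq (n + 1)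
  -- the witness point
  set x : ⨁ i, E i := ∑ i ∈ T', DirectSum.of E i (t i • v i) with hx
  have hxcoord : ∀ j : I, (x : ⨁ i, E i) j = if j ∈ T' then t j • v j else 0 := by
    intro j
    rw [hx, DFinsupp.finset_sum_apply]
    by_cases hj : j ∈ T'
    · rw [if_pos hj]
      rw [Finset.sum_eq_single_of_mem j hj]
      · exact DirectSum.of_eq_same j _
      · intro i _ hij
        exact DirectSum.of_eq_of_ne _ _ _ hij.symm
    · rw [if_neg hj]
      refine Finset.sum_eq_zero fun i hi => ?_
      exact DirectSum.of_eq_of_ne _ _ _ (fun hij => hj (hij ▸ hi))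
  -- x lies in the given neighborhood
  have hxU : ∀ k : K, dist ((k : C(⨁ i, E i, ℝ)) 0) ((k : C(⨁ i, E i, ℝ)) x) < 1 := by
    refine hVsub ?_
    show (fun v : ⨁ i, E i => (fun i => v i : ∀ i, E i)) x ∈ V
    apply hOV
    apply hUsO
    intro i _
    show x i ∈ Us i
    rw [hxcoord i]
    by_cases hi : i ∈ T'
    · rw [if_pos hi]
      exact htmem i
    · rw [if_neg hi]
      exact hUs0' i
  -- but g n x = 1
  have hgx : g n x = 1 := by
    have hsupp : x.support ⊆ T' := by
      intro j hj
      have := DFinsupp.mem_support_iff.1 hj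
      by_contra hjT
      rw [hxcoord j, if_neg hjT] at this
      exact this rfl
    have hsum : ∑ i ∈ x.support, h n (φ i (x i)) = ∑ i ∈ T', h n (φ i (x i)) := by
      refine Finset.sum_subset hsupp ?_
      intro i _ hi
      have : x i = 0 := by
        by_contra hne
        exact hi (DFinsupp.mem_support_iff.2 hne)
      rw [this, map_zero, hzero]
    have hterm : ∀ i ∈ T', h n (φ i (x i)) = 1 := by
      intro i hi
      rw [hxcoord i, if_pos hi, map_smul, smul_eq_mul, hφv i, mul_one]
      exact hbig n (t i) (hT'sub hi)
    rw [hg]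
    simp only []
    rw [hsum, Finset.sum_congr rfl hterm]
    rw [Finset.sum_const, nsmul_eq_mul, mul_one, hT'card]
    have hn1 : ((n : ℝ) + 1) ≠ 0 := by positivity
    rw [show (((n + 1 : ℕ) : ℝ)) = (n : ℝ) + 1 by push_cast; ring]
    rw [inv_mul_cancel₀ hn1]
    exact min_self 1
  -- contradiction
  have hmemK : fc n ∈ K := Set.mem_insert_of_mem _ ⟨n, rfl⟩
  have := hxU ⟨fc n, hmemK⟩
  have hfc0 : (fc n) (0 : ⨁ i, E i) = 0 := hg0 n
  have hfcx : (fc n) x = 1 := hgx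
  rw [hfc0, hfcx] at this
  simp [Real.dist_eq] at this
end

section
/- Let E be a Hausdorff real locally convex space. The following are equivalent: (i) E equipped with its weak topology σ(E,E′) (in Mathlib, WeakSpace ℝ E) is a barrelled space; (ii) every subset A of the topological dual E′ that is bounded in the weak* topology σ(E′,E) (equivalently, pointwise bounded: for every x ∈ E the set {f(x) : f ∈ A} is bounded in ℝ) spans a finite-dimensional linear subspace of E′; (iii) every subset of E′ that is functionally bounded in E′ equipped with the weak* topology σ(E′,E) spans a finite-dimensional linear subspace of E′. -/
open Set Topology

/-- A subset `A` of a topological space `Y` is functionally bounded if every continuous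
real-valued function on `Y` is bounded on `A`. -/
def FunctionallyBounded {Y : Type*} [TopologicalSpace Y] (A : Set Y) : Prop :=
  ∀ f : C(Y, ℝ), Bornology.IsBounded (f '' A)

open Filter

section Aux

variable {𝕜 E₀ F₀ : Type*}

/-- Evaluation at `y : F₀` as a continuous linear map on `WeakBilin B`. -/
def WeakBilin.evalCLM' [CommSemiring 𝕜] [TopologicalSpace 𝕜] [AddCommMonoid E₀] [Module 𝕜 E₀]
    [AddCommMonoid F₀] [Module 𝕜 F₀] (B : E₀ →ₗ[𝕜] F₀ →ₗ[𝕜] 𝕜) (y : F₀) :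
    WeakBilin B →L[𝕜] 𝕜 where
  toFun := fun x => B x y
  map_add' := fun a b => by
    exact B.map_add₂ a b y
  map_smul' := fun c a => by
    exact B.map_smul₂ c a y
  cont := WeakBilin.eval_continuous B y

variable {E : Type*} [AddCommGroup E] [Module ℝ E] [TopologicalSpace E]
    [IsTopologicalAddGroup E] [ContinuousSMul ℝ E]

theorem aux_i_ii [BarrelledSpace ℝ (WeakSpace ℝ E)]
    (A : Set (WeakDual ℝ E))
    (hA : ∀ x : E, Bornology.IsBounded ((fun f : WeakDual ℝ E => f x) '' A)) :
    FiniteDimensional ℝ (Submodule.span ℝ A) := by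
  classical
  have hC : ∀ x : E, ∃ C, ∀ f ∈ A, ‖f x‖ ≤ C := by
    intro x
    obtain ⟨C, hC⟩ := isBounded_iff_forall_norm_le.1 (hA x)
    exact ⟨C, fun f hf => hC _ (Set.mem_image_of_mem _ hf)⟩
  choose C hC using hC
  set B := (topDualPairing ℝ E).flip with hB
  have h1 : {x : WeakSpace ℝ E | ∀ f : A, ‖(f : WeakDual ℝ E) x‖ < 1} ∈
      𝓝 (0 : WeakSpace ℝ E) := by
    letI : UniformSpace (WeakSpace ℝ E) := IsTopologicalAddGroup.rightUniformSpace _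
    haveI : IsUniformAddGroup (WeakSpace ℝ E) := isUniformAddGroup_of_addCommGroup
    haveI : ContinuousSMul ℝ (WeakSpace ℝ E) := WeakBilin.instContinuousSMul _
    let 𝓕 : A → WeakSpace ℝ E →L[ℝ] ℝ := fun f => WeakBilin.evalCLM' B (f : WeakDual ℝ E)
    have hequi : UniformEquicontinuous ((↑) ∘ 𝓕) := by
      refine (norm_withSeminorms ℝ ℝ).banach_steinhaus (fun k x => ⟨C x, ?_⟩)
      rintro r ⟨f, rfl⟩
      exact hC x f.1 f.2
    have h2 := Metric.equicontinuousAt_iff_right.1 (hequi.equicontinuous 0) 1 one_pos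
    filter_upwards [h2] with x hx f
    have h3 : dist ((𝓕 f) 0) ((𝓕 f) x) < 1 := hx f
    rw [map_zero, dist_zero_left] at h3
    exact h3
  obtain ⟨U, hU, hUsub⟩ := (LinearMap.hasBasis_weakBilin B).mem_iff.1 h1
  have hU' : U ∈ B.toSeminormFamily.basisSets := hU
  rw [SeminormFamily.basisSets_iff] at hU'
  obtain ⟨t, r, hr, rfl⟩ := hU'
  have key : ∀ f ∈ A,
      f ∈ (Submodule.span ℝ (t : Set (E →L[ℝ] ℝ)) : Submodule ℝ (WeakDual ℝ E)) := by
    intro f hf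
    have hker : ⨅ g : t, LinearMap.ker (ContinuousLinearMap.coeLM ℝ (g : E →L[ℝ] ℝ)) ≤
        LinearMap.ker (ContinuousLinearMap.coeLM ℝ (f : E →L[ℝ] ℝ)) := by
      intro x hx
      simp only [Submodule.mem_iInf, LinearMap.mem_ker, ContinuousLinearMap.coeLM,
        LinearMap.coe_mk, AddHom.coe_mk, ContinuousLinearMap.coe_coe] at hx ⊢
      have hball : ∀ c : ℝ, (c • x : WeakSpace ℝ E) ∈ (t.sup B.toSeminormFamily).ball 0 r := by
        intro c
        rw [Seminorm.mem_ball_zero]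
        refine Seminorm.finset_sup_apply_lt hr ?_
        intro g hg
        have : (g : E →L[ℝ] ℝ) x = 0 := hx ⟨g, hg⟩
        have : B.toSeminormFamily g (c • x) = 0 := by
          simp [LinearMap.toSeminormFamily_apply, hB, map_smul, norm_smul, topDualPairing_apply, this]
        rw [this]; exact hr
      have hone : ∀ c : ℝ, ‖c‖ * ‖f x‖ < 1 := by
        intro c
        have := hUsub (hball c) ⟨f, hf⟩
        simpa [map_smul, norm_smul] using this
      by_contra hx0
      have hpos : 0 < ‖f x‖ := norm_pos_iff.2 hx0
      have := hone ‖f x‖⁻¹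
      rw [norm_inv, norm_norm, inv_mul_cancel₀ hpos.ne'] at this
      exact lt_irrefl _ this
    have hspan := mem_span_of_iInf_ker_le_ker (ι := t) hker
    have hrange : (Set.range fun g : t => ContinuousLinearMap.coeLM ℝ (g : E →L[ℝ] ℝ)) =
        ContinuousLinearMap.coeLM ℝ '' (t : Set (E →L[ℝ] ℝ)) := by
      ext y
      simp only [Set.mem_range, Set.mem_image, Finset.mem_coe, Subtype.exists]
      constructor
      · rintro ⟨g, hg, rfl⟩; exact ⟨g, hg, rfl⟩
      · rintro ⟨g, hg, rfl⟩; exact ⟨g, hg, rfl⟩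
    rw [hrange, Submodule.span_image] at hspan
    obtain ⟨g, hg, hgf⟩ := Submodule.mem_map.1 hspan
    have : g = f := ContinuousLinearMap.coe_injective hgf
    exact this ▸ hg
  have hle : Submodule.span ℝ A ≤
      (Submodule.span ℝ (t : Set (E →L[ℝ] ℝ)) : Submodule ℝ (WeakDual ℝ E)) :=
    Submodule.span_le.2 key
  haveI : FiniteDimensional ℝ
      ((Submodule.span ℝ (t : Set (E →L[ℝ] ℝ)) : Submodule ℝ (WeakDual ℝ E))) :=
    FiniteDimensional.span_of_finite ℝ t.finite_toSet
  exact Submodule.finiteDimensional_of_le hle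

set_option maxHeartbeats 1000000 in
theorem aux_ii_i
    (h : ∀ A : Set (WeakDual ℝ E),
        (∀ x : E, Bornology.IsBounded ((fun f : WeakDual ℝ E => f x) '' A)) →
          FiniteDimensional ℝ (Submodule.span ℝ A)) :
    BarrelledSpace ℝ (WeakSpace ℝ E) := by
  classical
  haveI : ContinuousSMul ℝ (WeakSpace ℝ E) := WeakBilin.instContinuousSMul _
  haveI : LocallyConvexSpace ℝ (WeakSpace ℝ E) := WeakBilin.locallyConvexSpace
  constructor
  intro p hp
  set T : Set (WeakSpace ℝ E) := {y | p y ≤ 1} with hT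
  have hT_closed : IsClosed T := hp.isClosed_preimage 1
  have hTcb : T = p.closedBall 0 1 := by
    ext y; simp [hT, Seminorm.mem_closedBall_zero]
  have hT_convex : Convex ℝ T := by rw [hTcb]; exact p.convex_closedBall 0 1
  have hT_balanced : ∀ y ∈ T, -y ∈ T := by
    intro y hy
    simpa [hT, map_neg_eq_map] using hy
  have hT_zero : (0 : WeakSpace ℝ E) ∈ T := by simp [hT]
  set A : Set (WeakDual ℝ E) := {f | ∀ y : WeakSpace ℝ E, y ∈ T → ‖f y‖ ≤ 1} with hA
  have hCex : ∀ x : E, ∃ C, 0 ≤ C ∧ ∀ f ∈ A, ‖f x‖ ≤ C := by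
    intro x
    set c : ℝ := p (toWeakSpace ℝ E x) + 1 with hc
    have hc0 : 0 < c := by
      have := apply_nonneg p (toWeakSpace ℝ E x); linarith
    refine ⟨c, hc0.le, fun f hf => ?_⟩
    have hmem : c⁻¹ • toWeakSpace ℝ E x ∈ T := by
      show p _ ≤ 1
      rw [map_smul_eq_mul]
      have : ‖c⁻¹‖ = c⁻¹ := by
        rw [Real.norm_eq_abs, abs_of_pos (inv_pos.2 hc0)]
      rw [this, inv_mul_le_iff₀ hc0, mul_one]
      linarith
    have h1 := hf _ hmem
    have h2 : c⁻¹ * ‖f x‖ ≤ 1 := by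
      have hfeq : f (c⁻¹ • toWeakSpace ℝ E x) = c⁻¹ * f x := by
        show f (c⁻¹ • x) = c⁻¹ * f x; exact map_smul f c⁻¹ x
      rw [hfeq] at h1
      calc c⁻¹ * ‖f x‖ = ‖c⁻¹ * f x‖ := by
            rw [norm_mul, Real.norm_eq_abs c⁻¹, abs_of_pos (inv_pos.2 hc0)]
        _ ≤ 1 := h1
    rw [inv_mul_le_iff₀ hc0, mul_one] at h2
    exact h2
  choose C hC0 hC using hCex
  have hAbdd : ∀ x : E, Bornology.IsBounded ((fun f : WeakDual ℝ E => f x) '' A) := by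
    intro x
    rw [isBounded_iff_forall_norm_le]
    exact ⟨C x, by rintro - ⟨f, hf, rfl⟩; exact hC x f hf⟩
  haveI hfin : FiniteDimensional ℝ (Submodule.span ℝ A) := h A hAbdd
  set V := Submodule.span ℝ A with hV
  set n := Module.finrank ℝ V with hn
  set b : Module.Basis (Fin n) ℝ V := Module.finBasis ℝ V with hb
  -- evaluation functionals on V
  let ev : E → (V →ₗ[ℝ] ℝ) := fun x =>
    { toFun := fun v => (v : WeakDual ℝ E) x
      map_add' := fun v w => rfl
      map_smul' := fun c v => rfl }
  have hcoord : ∀ i : Fin n, ∃ M, 0 ≤ M ∧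
      ∀ f, ∀ hf : f ∈ A, ‖(b.repr ⟨f, Submodule.subset_span hf⟩) i‖ ≤ M := by
    intro i
    have hker : ⨅ x : E, LinearMap.ker (ev x) ≤ LinearMap.ker (b.coord i) := by
      intro v hv
      have hv0 : (v : WeakDual ℝ E) = 0 := by
        apply ContinuousLinearMap.ext
        intro x
        exact (Submodule.mem_iInf _).1 hv x
      have : v = 0 := by
        exact Subtype.ext hv0
      simp [this]
    have hmem := FiniteDimensional.mem_span_of_iInf_ker_le_ker (L := ev) (K := b.coord i) hker
    obtain ⟨m, a, g, hsum⟩ := Submodule.mem_span_set'.1 hmem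
    choose xs hxs using fun j : Fin m => (g j).2
    refine ⟨∑ j, ‖a j‖ * C (xs j), Finset.sum_nonneg fun j _ => mul_nonneg (norm_nonneg _) (hC0 _), ?_⟩
    intro f hf
    set v : V := ⟨f, Submodule.subset_span hf⟩ with hv
    have hexp : (b.repr v) i = ∑ j, a j * ((g j : V →ₗ[ℝ] ℝ) v) := by
      rw [← Module.Basis.coord_apply, ← hsum]
      simp
    rw [hexp]
    calc ‖∑ j, a j * ((g j : V →ₗ[ℝ] ℝ) v)‖ ≤ ∑ j, ‖a j * ((g j : V →ₗ[ℝ] ℝ) v)‖ :=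
          norm_sum_le _ _
      _ ≤ ∑ j, ‖a j‖ * C (xs j) := by
          apply Finset.sum_le_sum
          intro j _
          rw [norm_mul]
          refine mul_le_mul_of_nonneg_left ?_ (norm_nonneg _)
          have : ((g j : V →ₗ[ℝ] ℝ) v) = f (xs j) := by rw [← hxs j]; rfl
          rw [this]
          exact hC (xs j) f hf
  choose M hM0 hM using hcoord
  set S : ℝ := 1 + ∑ i, M i with hS
  have hsum0 : 0 ≤ ∑ i, M i := Finset.sum_nonneg fun i _ => hM0 i
  have hS0 : 0 < S := by rw [hS]; linarith
  set r : ℝ := S⁻¹ with hr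
  have hr0 : 0 < r := inv_pos.2 hS0
  set W : Set (WeakSpace ℝ E) := {x | ∀ i, ‖((b i : WeakDual ℝ E)) x‖ < r} with hW
  have hW_open : IsOpen W := by
    have : W = ⋂ i, (fun x : WeakSpace ℝ E => ‖((b i : WeakDual ℝ E)) x‖) ⁻¹' Iio r := by
      ext x; simp [hW]
    rw [this]
    refine isOpen_iInter_of_finite fun i => IsOpen.preimage ?_ isOpen_Iio
    exact (WeakBilin.eval_continuous ((topDualPairing ℝ E).flip) ((b i : WeakDual ℝ E))).norm
  have hW0 : (0 : WeakSpace ℝ E) ∈ W := by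
    intro i
    have h0 : ((b i : WeakDual ℝ E)) (0 : E) = 0 := map_zero _
    show ‖((b i : WeakDual ℝ E)) (0 : E)‖ < r
    rw [h0]
    simpa using hr0
  have hWbound : ∀ x ∈ W, ∀ f ∈ A, ‖f x‖ ≤ 1 := by
    intro x hx f hf
    set v : V := ⟨f, Submodule.subset_span hf⟩ with hv
    have h0 := b.sum_repr v
    have hexp : ((v : WeakDual ℝ E)) = ∑ i, (b.repr v) i • (b i : WeakDual ℝ E) := by
      conv_lhs => rw [← h0]
      push_cast
      rfl
    set φ : WeakDual ℝ E →ₗ[ℝ] ℝ := (topDualPairing ℝ E).flip x with hφ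
    have happ : f x = ∑ i, (b.repr v) i * ((b i : WeakDual ℝ E) x) := by
      have h1 : f x = φ (v : WeakDual ℝ E) := rfl
      rw [h1, hexp, map_sum]
      exact Finset.sum_congr rfl fun i _ => rfl
    rw [happ]
    calc ‖∑ i, (b.repr v) i * ((b i : WeakDual ℝ E) x)‖
        ≤ ∑ i, ‖(b.repr v) i‖ * ‖((b i : WeakDual ℝ E) x)‖ := by
          refine (norm_sum_le _ _).trans ?_
          apply Finset.sum_le_sum; intro i _; rw [norm_mul]
      _ ≤ ∑ i, M i * r := by
          apply Finset.sum_le_sum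
          intro i _
          exact mul_le_mul (hM i f hf) (hx i).le (norm_nonneg _) (hM0 i)
      _ = (∑ i, M i) * r := by rw [Finset.sum_mul]
      _ ≤ S * r := by
          apply mul_le_mul_of_nonneg_right _ hr0.le
          linarith
      _ = 1 := by rw [hr]; exact mul_inv_cancel₀ hS0.ne'
  have hWT : W ⊆ T := by
    intro x hxW
    by_contra hxT
    obtain ⟨g, u, hgT, hgx⟩ := geometric_hahn_banach_closed_point hT_convex hT_closed hxT
    have hu0 : 0 < u := by simpa using hgT 0 hT_zero
    set g' : WeakDual ℝ E := (u⁻¹ • g).comp (toWeakSpaceCLM ℝ E) with hg'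
    have hg'app : ∀ y : WeakSpace ℝ E, g' y = u⁻¹ * g y := fun y => rfl
    have hg'A : g' ∈ A := by
      intro y hy
      have h1 : g y < u := hgT y hy
      have h2 : -(g y) < u := by
        have := hgT (-y) (hT_balanced y hy)
        simpa using this
      have habs : |g y| < u := abs_lt.2 ⟨by linarith, h1⟩
      rw [hg'app y, Real.norm_eq_abs, abs_mul, abs_of_pos (inv_pos.2 hu0)]
      rw [inv_mul_le_iff₀ hu0, mul_one]
      exact habs.le
    have hle := hWbound x hxW g' hg'A
    have hgt : (1 : ℝ) < g' x := by
      rw [hg'app x]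
      have := mul_lt_mul_of_pos_left hgx (inv_pos.2 hu0)
      rwa [inv_mul_cancel₀ hu0.ne'] at this
    have : g' x ≤ 1 := le_trans (le_abs_self _) (by rwa [Real.norm_eq_abs] at hle)
    linarith
  have hTnhds : p.closedBall 0 1 ∈ 𝓝 (0 : WeakSpace ℝ E) := by
    rw [← hTcb]
    exact Filter.mem_of_superset (hW_open.mem_nhds hW0) hWT
  exact Seminorm.continuous' hTnhds

/-- Functionally bounded sets in the weak-star dual are pointwise bounded. -/
theorem aux_fb_pw (A : Set (WeakDual ℝ E)) (hA : FunctionallyBounded A) (x : E) :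
    Bornology.IsBounded ((fun f : WeakDual ℝ E => f x) '' A) := by
  exact hA ⟨fun f : WeakDual ℝ E => f x, WeakDual.eval_continuous x⟩

theorem aux_iii_ii
    (h : ∀ A : Set (WeakDual ℝ E), FunctionallyBounded A →
        FiniteDimensional ℝ (Submodule.span ℝ A))
    (A : Set (WeakDual ℝ E))
    (hA : ∀ x : E, Bornology.IsBounded ((fun f : WeakDual ℝ E => f x) '' A)) :
    FiniteDimensional ℝ (Submodule.span ℝ A) := by
  classical
  have hC : ∀ x : E, ∃ C, ∀ f ∈ A, ‖f x‖ ≤ C := by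
    intro x
    obtain ⟨C, hC⟩ := isBounded_iff_forall_norm_le.1 (hA x)
    exact ⟨C, fun f hf => hC _ (Set.mem_image_of_mem _ hf)⟩
  choose C hC using hC
  by_contra hinf
  obtain ⟨s, hsA, hspan, hli⟩ := exists_linearIndependent ℝ A
  have hs_inf : s.Infinite := by
    intro hfin
    exact hinf (hspan ▸ FiniteDimensional.span_of_finite ℝ hfin)
  set e := hs_inf.natEmbedding with he
  set f : ℕ → WeakDual ℝ E := fun k => (e k : WeakDual ℝ E) with hf
  have hfA : ∀ k, f k ∈ A := fun k => hsA (e k).2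
  have hfli : LinearIndependent ℝ f := hli.comp e e.injective
  set g : ℕ → WeakDual ℝ E := fun k => ((k : ℝ) + 1)⁻¹ • f k with hg
  have hg0 : Tendsto g atTop (𝓝 0) := by
    rw [tendsto_iff_forall_eval_tendsto_topDualPairing]
    intro x
    show Tendsto (fun k : ℕ => g k x) atTop (𝓝 (0 : ℝ))
    apply squeeze_zero_norm (a := fun k : ℕ => C x * ((k : ℝ) + 1)⁻¹)
    · intro k
      have h1 : g k x = ((k : ℝ) + 1)⁻¹ * f k x := rfl
      have hnorm : ‖((k : ℝ) + 1)⁻¹‖ = ((k : ℝ) + 1)⁻¹ := by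
        rw [Real.norm_eq_abs]; exact abs_of_pos (by positivity)
      rw [h1, norm_mul, mul_comm, hnorm]
      exact mul_le_mul_of_nonneg_right (hC x _ (hfA k)) (by positivity)
    · have := tendsto_one_div_add_atTop_nhds_zero_nat (𝕜 := ℝ)
      have h2 : Tendsto (fun k : ℕ => ((k : ℝ) + 1)⁻¹) atTop (𝓝 0) := by
        simpa [one_div] using this
      simpa using h2.const_mul (C x)
  set K : Set (WeakDual ℝ E) := insert 0 (Set.range g) with hK
  have hKfb : FunctionallyBounded K := by
    intro φ
    have himg : φ '' K ⊆ insert (φ 0) (Set.range fun k => φ (g k)) := by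
      rintro - ⟨y, hy, rfl⟩
      rcases hy with rfl | ⟨k, rfl⟩
      · exact Set.mem_insert _ _
      · exact Set.mem_insert_of_mem _ ⟨k, rfl⟩
    refine Bornology.IsBounded.subset ?_ himg
    refine (Bornology.IsBounded.insert ?_ _)
    exact Metric.isBounded_range_of_tendsto _ ((φ.continuous.tendsto 0).comp hg0)
  haveI hKfin := h K hKfb
  have hginK : ∀ k, f k ∈ Submodule.span ℝ K := by
    intro k
    have hgk : g k ∈ Submodule.span ℝ K :=
      Submodule.subset_span (Set.mem_insert_of_mem _ ⟨k, rfl⟩)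
    have : ((k : ℝ) + 1) • g k ∈ Submodule.span ℝ K := Submodule.smul_mem _ _ hgk
    have hne : ((k : ℝ) + 1) ≠ 0 := by positivity
    rwa [hg, smul_smul, mul_inv_cancel₀ hne, one_smul] at this
  set v : ℕ → Submodule.span ℝ K := fun k => ⟨f k, hginK k⟩ with hv
  have hvli : LinearIndependent ℝ v := by
    apply LinearIndependent.of_comp (Submodule.span ℝ K).subtype
    exact hfli
  haveI := hvli.finite
  exact not_finite ℕ


end Aux

/-- For a Hausdorff real locally convex space `E`, the following are equivalent:
(i) `E` with its weak topology is barrelled; (ii) every pointwise bounded subset of the dual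
spans a finite-dimensional subspace; (iii) every subset of the dual that is functionally
bounded in the weak* topology spans a finite-dimensional subspace. -/
theorem statement16 {E : Type*} [AddCommGroup E] [Module ℝ E] [TopologicalSpace E]
    [IsTopologicalAddGroup E] [ContinuousSMul ℝ E] [LocallyConvexSpace ℝ E] [T2Space E] :
    (BarrelledSpace ℝ (WeakSpace ℝ E) ↔
      ∀ A : Set (WeakDual ℝ E),
        (∀ x : E, Bornology.IsBounded ((fun f : WeakDual ℝ E => f x) '' A)) →
          FiniteDimensional ℝ (Submodule.span ℝ A)) ∧
    ((∀ A : Set (WeakDual ℝ E),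
        (∀ x : E, Bornology.IsBounded ((fun f : WeakDual ℝ E => f x) '' A)) →
          FiniteDimensional ℝ (Submodule.span ℝ A)) ↔
      ∀ A : Set (WeakDual ℝ E), FunctionallyBounded A →
        FiniteDimensional ℝ (Submodule.span ℝ A)) := by
  constructor
  · constructor
    · intro hi A hA
      haveI := hi
      exact aux_i_ii A hA
    · exact aux_ii_i
  · constructor
    · intro hii A hA
      exact hii A (fun x => aux_fb_pw A hA x)
    · exact aux_iii_ii
end

section
/- Let X be a completely regular Hausdorff space and let C_k(X) denote the space C(X,ℝ) of continuous real-valued functions with the compact-open topology (a real topological vector space). Then the compact-open topology on C(X,ℝ) coincides with the weak topology σ(C(X,ℝ), C_k(X)′) — equivalently, the canonical identity map from C_k(X) to C_k(X) equipped with its weak topology (in Mathlib, WeakSpace ℝ C_k(X)) is a homeomorphism — if and only if every compact subset of X is finite. In that case the compact-open topology also coincides with the topology of pointwise convergence on C(X,ℝ). -/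
open Set Topology

section Aux

variable {X : Type*} [TopologicalSpace X] [CompletelyRegularSpace X] [T2Space X]

/-- Evaluation at a point as a continuous linear functional on `C(X, ℝ)`. -/
private noncomputable def evCLM (x : X) : C(X, ℝ) →L[ℝ] ℝ :=
  { toFun := fun f => f x
    map_add' := fun _ _ => rfl
    map_smul' := fun _ _ => rfl
    cont := continuous_eval_const x }

private lemma co_eq_pt (hfin : ∀ K : Set X, IsCompact K → K.Finite) :
    (ContinuousMap.compactOpen : TopologicalSpace C(X, ℝ)) =
      TopologicalSpace.induced (fun f : C(X, ℝ) => (f : X → ℝ)) Pi.topologicalSpace := by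
  refine le_antisymm (continuous_iff_le_induced.mp continuous_coeFun) ?_
  rw [ContinuousMap.compactOpen_eq]
  refine le_generateFrom fun s hs => ?_
  obtain ⟨K, hK, U, hU, rfl⟩ := hs
  have hU' : IsOpen U := hU
  have hset : {f : C(X, ℝ) | MapsTo f K U} =
      (fun f : C(X, ℝ) => (f : X → ℝ)) ⁻¹' (K.pi fun _ => U) := by
    ext f; simp [MapsTo, Set.mem_pi]
  show IsOpen[TopologicalSpace.induced (fun f : C(X, ℝ) => (f : X → ℝ)) Pi.topologicalSpace]
    {f : C(X, ℝ) | MapsTo f K U}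
  rw [hset]
  exact isOpen_induced (isOpen_set_pi (hfin K hK) fun _ _ => hU')

end Aux

/-- For a completely regular Hausdorff space `X`, the compact-open topology on `C(X,ℝ)`
coincides with the weak topology `σ(C(X,ℝ), C_k(X)′)` (i.e. the canonical identity map from
`C_k(X)` to `C_k(X)` with its weak topology is a homeomorphism) if and only if every compact
subset of `X` is finite; in that case the compact-open topology also coincides with the
topology of pointwise convergence. -/
theorem statement19 {X : Type*} [TopologicalSpace X] [CompletelyRegularSpace X] [T2Space X] :
    ((IsHomeomorph (⇑(toWeakSpace ℝ C(X, ℝ)))) ↔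
      ∀ K : Set X, IsCompact K → K.Finite) ∧
    ((∀ K : Set X, IsCompact K → K.Finite) →
      (ContinuousMap.compactOpen : TopologicalSpace C(X, ℝ)) =
        TopologicalSpace.induced (fun f : C(X, ℝ) => (f : X → ℝ)) Pi.topologicalSpace) := by
  constructor
  · constructor
    · -- hard direction
      intro h K hK
      by_contra hKfin
      have hinf : K.Infinite := hKfin
      have hVopen : IsOpen {f : C(X, ℝ) | MapsTo f K (Metric.ball (0:ℝ) 1)} :=
        ContinuousMap.isOpen_setOf_mapsTo hK Metric.isOpen_ball
      have h0V : (0 : C(X, ℝ)) ∈ {f : C(X, ℝ) | MapsTo f K (Metric.ball (0:ℝ) 1)} :=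
        fun x _ => by simp
      have himg : (⇑(toWeakSpace ℝ C(X, ℝ)) '' {f : C(X, ℝ) | MapsTo f K (Metric.ball (0:ℝ) 1)})
          ∈ 𝓝 (0 : WeakSpace ℝ C(X, ℝ)) :=
        (h.isOpenMap _ hVopen).mem_nhds ⟨0, h0V, map_zero _⟩
      have hind : IsInducing (fun (w : WeakSpace ℝ C(X, ℝ)) (L : C(X, ℝ) →L[ℝ] ℝ) =>
          (topDualPairing ℝ C(X, ℝ)).flip w L) := ⟨rfl⟩
      rw [hind.nhds_eq_comap, Filter.mem_comap] at himg
      obtain ⟨S, hS, hSsub⟩ := himg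
      have hzero : (fun L : C(X, ℝ) →L[ℝ] ℝ => (topDualPairing ℝ C(X, ℝ)).flip (0 : WeakSpace ℝ C(X, ℝ)) L)
          = (0 : (C(X, ℝ) →L[ℝ] ℝ) → ℝ) := by
        funext L; show L (0 : C(X, ℝ)) = 0; simp
      rw [hzero, nhds_pi, Filter.mem_pi] at hS
      obtain ⟨I, hIfin, t, ht, htsub⟩ := hS
      -- key: functions killed by all of I vanish on K
      have key : ∀ f : C(X, ℝ), (∀ L ∈ I, L f = 0) → ∀ x ∈ K, f x = 0 := by
        intro f hf x hx
        have hc : ∀ c : ℝ, MapsTo (c • f) K (Metric.ball (0:ℝ) 1) := by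
          intro c
          have hmem : toWeakSpace ℝ C(X, ℝ) (c • f) ∈
              (fun (w : WeakSpace ℝ C(X, ℝ)) (L : C(X, ℝ) →L[ℝ] ℝ) =>
                (topDualPairing ℝ C(X, ℝ)).flip w L) ⁻¹' S := by
            apply htsub
            intro L hL
            have h1 : (topDualPairing ℝ C(X, ℝ)).flip (toWeakSpace ℝ C(X, ℝ) (c • f)) L
                = c * L f := by
              show L (c • f) = c * L f
              simp
            show ((topDualPairing ℝ C(X, ℝ)).flip ((toWeakSpace ℝ C(X, ℝ)) (c • f))) L ∈ t L
            rw [h1, hf L hL, mul_zero]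
            exact mem_of_mem_nhds (by simpa using ht L)
          obtain ⟨g, hgV, hg⟩ := hSsub hmem
          have : g = c • f := (toWeakSpace ℝ C(X, ℝ)).injective hg
          rwa [this] at hgV
        by_contra hfx
        have h1 := hc (f x)⁻¹ hx
        rw [mem_ball_zero_iff] at h1
        have : ((f x)⁻¹ • f) x = 1 := by
          simp [inv_mul_cancel₀ hfx]
        rw [this] at h1
        simp at h1
      -- linear algebra contradiction
      haveI := hIfin.fintype
      obtain ⟨T, hTK, hTcard⟩ := hinf.exists_subset_card_eq (hIfin.toFinset.card + 1)
      set n := hIfin.toFinset.card with hn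
      have e : Fin (n + 1) ≃ {a // a ∈ T} := (T.equivFin.trans (finCongr hTcard)).symm
      set p : Fin (n + 1) → X := fun j => (e j : X) with hp
      have hpinj : Function.Injective p := fun i j hij => e.injective (Subtype.ext hij)
      have hpK : ∀ j, p j ∈ K := fun j => hTK (e j).2
      have hdelta : ∀ j : Fin (n + 1),
          ∃ g : C(X, ℝ), g (p j) = 1 ∧ ∀ i, i ≠ j → g (p i) = 0 := by
        intro j
        have hFfin : (p '' {i | i ≠ j}).Finite := (Set.toFinite _).image _
        have hFcl : IsClosed (p '' {i | i ≠ j}) := hFfin.isClosed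
        have hnot : p j ∉ p '' {i | i ≠ j} := by
          rintro ⟨i, hi, hip⟩; exact hi (hpinj hip)
        obtain ⟨f, hfc, hf0, hf1⟩ :=
          CompletelyRegularSpace.completely_regular (p j) _ hFcl hnot
        refine ⟨⟨fun y => 1 - (f y : ℝ),
          continuous_const.sub (continuous_subtype_val.comp hfc)⟩, ?_, ?_⟩
        · simp [hf0]
        · intro i hij
          have : f (p i) = 1 := hf1 ⟨i, hij, rfl⟩
          simp [this]
      choose g hg1 hg0 using hdelta
      set v : Fin (n + 1) → ({L // L ∈ hIfin.toFinset} → ℝ) :=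
        fun j L => (L : C(X, ℝ) →L[ℝ] ℝ) (g j) with hv
      have hdep : ¬ LinearIndependent ℝ v := by
        intro hli
        have hle := hli.fintype_card_le_finrank
        rw [Module.finrank_fintype_fun_eq_card, Fintype.card_coe] at hle
        simp only [Fintype.card_fin] at hle
        omega
      obtain ⟨c, hsum, i, hci⟩ := Fintype.not_linearIndependent_iff.mp hdep
      have hg0K : ∀ L ∈ I, L (∑ j, c j • g j) = 0 := by
        intro L hL
        have h1 : L (∑ j, c j • g j) = ∑ j, c j • (L (g j)) := by
          rw [map_sum]
          simp
        rw [h1]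
        have h2 := congrFun hsum ⟨L, hIfin.mem_toFinset.mpr hL⟩
        simpa [hv, Finset.sum_apply] using h2
      have hzero2 : (∑ j, c j • g j) (p i) = 0 := key _ hg0K (p i) (hpK i)
      have hval : (∑ j, c j • g j) (p i) = c i := by
        simp only [ContinuousMap.coe_sum, Finset.sum_apply]
        rw [Finset.sum_eq_single i (fun b _ hb => by simp [hg0 b i (Ne.symm hb)])
          (fun hmem => absurd (Finset.mem_univ i) hmem)]
        simp [hg1 i]
      rw [hval] at hzero2
      exact hci hzero2
    · -- easy direction
      intro hfin
      have hx_cont : ∀ x : X, Continuous fun w : WeakSpace ℝ C(X, ℝ) =>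
          ((toWeakSpace ℝ C(X, ℝ)).symm w : C(X, ℝ)) x := fun x =>
        WeakBilin.eval_continuous ((topDualPairing ℝ C(X, ℝ)).flip) (evCLM x)
      have hcont_inv : Continuous (⇑(toWeakSpace ℝ C(X, ℝ)).symm :
          WeakSpace ℝ C(X, ℝ) → C(X, ℝ)) := by
        refine ContinuousMap.continuous_compactOpen.mpr fun K hK U hU => ?_
        have hset : {w : WeakSpace ℝ C(X, ℝ) |
              MapsTo ((toWeakSpace ℝ C(X, ℝ)).symm w) K U} =
            ⋂ x ∈ K, (fun w : WeakSpace ℝ C(X, ℝ) =>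
              ((toWeakSpace ℝ C(X, ℝ)).symm w : C(X, ℝ)) x) ⁻¹' U := by
          ext w; simp [MapsTo]
        rw [hset]
        exact (hfin K hK).isOpen_biInter fun x _ => (hx_cont x).isOpen_preimage U hU
      let H : C(X, ℝ) ≃ₜ WeakSpace ℝ C(X, ℝ) :=
        { toEquiv := (toWeakSpace ℝ C(X, ℝ)).toEquiv
          continuous_toFun := (toWeakSpaceCLM ℝ C(X, ℝ)).continuous
          continuous_invFun := hcont_inv }
      exact H.isHomeomorph
  · exact co_eq_pt
end
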